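/- Let Λ be a finite set, H a self-adjoint operator on ℓ²(Λ) with orthonormal eigenbasis {ψ_i} and eigenvalues {λ_i}, and I ⊂ ℝ an interval. Fix x, y ∈ Λ. Suppose there is a finite set S of points of Λ, and for each i with λ_i ∈ I there exists z_i ∈ {x,y} such that |ψ_i(z_i)| ≤ e^{−mL} · Σ_{u∈S} |ψ_i(u)| for some m > 0 and L ≥ 1. Then for every Borel function φ with sup|φ| ≤ 1 and supp φ ⊆ I, the eigenfunction correlator satisfies |⟨δ_x, φ(H) δ_y⟩| ≤ 2|S| · e^{−mL}. -/

import Mathlib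

lemma bessel_aux {Λ : Type*} [Fintype Λ] (n : ℕ) (ψ : Fin n → Λ → ℂ)
    (horth : ∀ i j, ∑ v, ψ i v * (starRingEnd ℂ) (ψ j v) = if i = j then 1 else 0)
    (u : Λ) : ∑ i, ‖ψ i u‖ ^ 2 ≤ 1 := by
  classical
  set V : Fin n → EuclideanSpace ℂ Λ := fun i => (WithLp.equiv 2 _).symm (ψ i) with hV
  have hon : Orthonormal ℂ V := by
    rw [orthonormal_iff_ite]
    intro i j
    have := horth j i
    simp only [PiLp.inner_apply, RCLike.inner_apply, hV, WithLp.equiv_symm_apply, PiLp.toLp_apply]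
    rw [show ((if i = j then (1:ℂ) else 0)) = if j = i then 1 else 0 by simp [eq_comm], ← this]
  have hb := hon.sum_inner_products_le (EuclideanSpace.single u (1:ℂ)) (s := Finset.univ)
  have hn : ‖EuclideanSpace.single u (1:ℂ)‖ = 1 := by
    rw [EuclideanSpace.norm_single]; simp
  rw [hn] at hb
  calc ∑ i, ‖ψ i u‖ ^ 2
      = ∑ i : Fin n, ‖(inner ℂ (V i) (EuclideanSpace.single u (1:ℂ)) : ℂ)‖ ^ 2 := by
        refine Finset.sum_congr rfl fun i _ => ?_
        rw [EuclideanSpace.inner_single_right]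
        simp [hV]
    _ ≤ 1 ^ 2 := hb
    _ = 1 := one_pow 2


/-- Core deterministic estimate of Theorem 4.6 (finite-volume dynamical localization).
For a self-adjoint operator on `ℓ²(Λ)` with orthonormal eigenbasis `{ψ_i}`, eigenvalues
`{λ_i}`, if for each `i` with `λ_i ∈ I` some `z_i ∈ {x,y}` satisfies
`|ψ_i(z_i)| ≤ e^{-mL} Σ_{u∈S} |ψ_i(u)|`, then for any Borel `φ` with `|φ| ≤ 1` supported
in `I`, `|⟨δ_x, φ(H) δ_y⟩| ≤ 2|S| e^{-mL}`. -/
theorem stmt_3 {Λ : Type*} [Fintype Λ] (n : ℕ)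
    (ψ : Fin n → Λ → ℂ) (lam : Fin n → ℝ)
    (horth : ∀ i j, ∑ v, ψ i v * (starRingEnd ℂ) (ψ j v) = if i = j then 1 else 0)
    (I : Set ℝ) (x y : Λ) (S : Finset Λ) (m L : ℝ) (hm : 0 < m) (hL : 1 ≤ L)
    (hz : ∀ i, lam i ∈ I → ∃ z ∈ ({x, y} : Set Λ),
      ‖ψ i z‖ ≤ Real.exp (-m * L) * ∑ u ∈ S, ‖ψ i u‖)
    (φ : ℝ → ℂ) (hφ1 : ∀ t, ‖φ t‖ ≤ 1) (hφ2 : ∀ t, t ∉ I → φ t = 0) :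
    ‖∑ i, φ (lam i) * ψ i x * (starRingEnd ℂ) (ψ i y)‖ ≤
      2 * (S.card : ℝ) * Real.exp (-m * L) := by
  classical
  set E := Real.exp (-m * L) with hE
  have hE0 : 0 < E := Real.exp_pos _
  set B : Fin n → Λ → ℝ := fun i u =>
    (‖ψ i u‖ ^ 2 + ‖ψ i x‖ ^ 2 + ‖ψ i y‖ ^ 2) / 2 with hB
  have key : ∀ i, ‖φ (lam i)‖ * (‖ψ i x‖ * ‖ψ i y‖) ≤
      E * ∑ u ∈ S, B i u := by
    intro i
    by_cases hI : lam i ∈ I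
    · obtain ⟨z, hzmem, hzb⟩ := hz i hI
      have step : ∀ v : Λ, (v = x ∨ v = y) →
          ‖ψ i z‖ * ‖ψ i v‖ ≤ E * ∑ u ∈ S, B i u := by
        intro v hv
        calc ‖ψ i z‖ * ‖ψ i v‖
            ≤ (E * ∑ u ∈ S, ‖ψ i u‖) * ‖ψ i v‖ :=
              mul_le_mul_of_nonneg_right hzb (norm_nonneg _)
          _ = E * ∑ u ∈ S, ‖ψ i u‖ * ‖ψ i v‖ := by
              rw [mul_assoc, Finset.sum_mul]
          _ ≤ E * ∑ u ∈ S, B i u := by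
              refine mul_le_mul_of_nonneg_left (Finset.sum_le_sum fun u _ => ?_) hE0.le
              have h1 : ‖ψ i u‖ * ‖ψ i v‖ ≤
                  (‖ψ i u‖ ^ 2 + ‖ψ i v‖ ^ 2) / 2 := by
                nlinarith [sq_nonneg (‖ψ i u‖ - ‖ψ i v‖)]
              have h2 : ‖ψ i v‖ ^ 2 ≤
                  ‖ψ i x‖ ^ 2 + ‖ψ i y‖ ^ 2 := by
                rcases hv with h | h <;> rw [h] <;>
                  nlinarith [sq_nonneg (‖ψ i x‖), sq_nonneg (‖ψ i y‖)]
              rw [hB]; dsimp only; linarith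
      have hxy : ‖ψ i x‖ * ‖ψ i y‖ ≤ E * ∑ u ∈ S, B i u := by
        rcases hzmem with h | h
        · subst h; exact step y (Or.inr rfl)
        · simp only [Set.mem_singleton_iff] at h; subst h
          rw [mul_comm]; exact step x (Or.inl rfl)
      calc ‖φ (lam i)‖ * (‖ψ i x‖ * ‖ψ i y‖)
          ≤ 1 * (‖ψ i x‖ * ‖ψ i y‖) :=
            mul_le_mul_of_nonneg_right (hφ1 _) (by positivity)
        _ = _ := one_mul _
        _ ≤ E * ∑ u ∈ S, B i u := hxy
    · rw [hφ2 _ hI]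
      simp only [norm_zero, zero_mul]
      refine mul_nonneg hE0.le (Finset.sum_nonneg fun u _ => ?_)
      rw [hB]; positivity
  calc ‖∑ i, φ (lam i) * ψ i x * (starRingEnd ℂ) (ψ i y)‖
      ≤ ∑ i, ‖φ (lam i) * ψ i x * (starRingEnd ℂ) (ψ i y)‖ :=
        norm_sum_le _ _
    _ = ∑ i, ‖φ (lam i)‖ * (‖ψ i x‖ * ‖ψ i y‖) := by
        refine Finset.sum_congr rfl fun i _ => ?_
        rw [norm_mul, norm_mul, Complex.norm_conj, mul_assoc]
    _ ≤ ∑ i, E * ∑ u ∈ S, B i u := Finset.sum_le_sum fun i _ => key i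
    _ = E * ∑ u ∈ S, ∑ i, B i u := by rw [← Finset.mul_sum, Finset.sum_comm]
    _ ≤ E * ∑ u ∈ S, (3 / 2 : ℝ) := by
        refine mul_le_mul_of_nonneg_left (Finset.sum_le_sum fun u _ => ?_) hE0.le
        have h1 := bessel_aux n ψ horth u
        have h2 := bessel_aux n ψ horth x
        have h3 := bessel_aux n ψ horth y
        rw [hB]
        simp only
        rw [← Finset.sum_div]
        have : ∑ i, (‖ψ i u‖ ^ 2 + ‖ψ i x‖ ^ 2 +
            ‖ψ i y‖ ^ 2) = (∑ i, ‖ψ i u‖ ^ 2) +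
            (∑ i, ‖ψ i x‖ ^ 2) + (∑ i, ‖ψ i y‖ ^ 2) := by
          rw [Finset.sum_add_distrib, Finset.sum_add_distrib]
        rw [this]; linarith
    _ = E * (3 / 2 * S.card) := by rw [Finset.sum_const, nsmul_eq_mul, mul_comm (S.card : ℝ)]
    _ ≤ 2 * (S.card : ℝ) * E := by nlinarith [hE0.le, Nat.cast_nonneg (α := ℝ) S.card]
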